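/- arXiv:1509.02435 — 2 statements merged into one kernel-verified Lean document; each statement's English description precedes it below -/
import Mathlib

section
/- Let G be a finitely generated group with finite generating set X, and let S ⊆ G. Suppose G = Sg₁ ∪ ... ∪ Sgₘ for some elements g₁, ..., gₘ each of word length at most C with respect to X. Then liminf_{k→∞} |S ∩ B_X(k)| / |B_X(k)| ≥ 1/(m·|B_X(C)|), where B_X(k) denotes the ball of radius k centered at the identity in the word metric d_X. -/
open scoped Pointwise


/-- The ball of radius `k` about the identity in the word metric on `G`
determined by the generating set `X` (with respect to `X ∪ X⁻¹`). -/
def ball {G : Type*} [Group G] (X : Set G) (k : ℕ) : Set G :=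
  {g | ∃ l : List G, (∀ x ∈ l, x ∈ X ∨ x⁻¹ ∈ X) ∧ l.length ≤ k ∧ l.prod = g}

lemma one_mem_ball {G : Type*} [Group G] (X : Set G) (k : ℕ) : (1 : G) ∈ ball X k :=
  ⟨[], by simp, by simp, by simp⟩

lemma ball_finite {G : Type*} [Group G] {X : Set G} (hXfin : X.Finite) (k : ℕ) :
    (ball X k).Finite := by
  induction k with
  | zero =>
    apply Set.Finite.subset (Set.finite_singleton (1 : G))
    rintro x ⟨l, _, hlen, hprod⟩
    interval_cases h : l.length
    · simp [List.length_eq_zero_iff.mp h] at hprod; simp [← hprod]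
  | succ n ih =>
    have hY : ((X ∪ X⁻¹ ∪ {1}) * ball X n).Finite := by
      apply Set.Finite.mul _ ih
      exact (hXfin.union hXfin.inv).union (Set.finite_singleton 1)
    apply hY.subset
    rintro x ⟨l, hmem, hlen, hprod⟩
    match l with
    | [] =>
      exact ⟨1, by simp, 1, one_mem_ball X n, by simp [← hprod]⟩
    | a :: t =>
      refine ⟨a, ?_, t.prod, ⟨t, fun y hy => hmem y (List.mem_cons_of_mem a hy),
        ?_, rfl⟩, by simp [← hprod]⟩
      · rcases hmem a List.mem_cons_self with h | h
        · exact Or.inl (Or.inl h)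
        · exact Or.inl (Or.inr (by simpa using h))
      · simpa using Nat.succ_le_succ_iff.mp (by simpa using hlen)

lemma inv_mem_ball {G : Type*} [Group G] {X : Set G} {k : ℕ} {x : G} (hx : x ∈ ball X k) :
    x⁻¹ ∈ ball X k := by
  obtain ⟨l, hmem, hlen, hprod⟩ := hx
  refine ⟨(l.map (·⁻¹)).reverse, ?_, by simpa using hlen, ?_⟩
  · intro y hy
    simp only [List.mem_reverse, List.mem_map] at hy
    obtain ⟨a, ha, rfl⟩ := hy
    rcases hmem a ha with h | h
    · exact Or.inr (by simpa using h)
    · exact Or.inl h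
  · rw [← hprod, ← List.prod_inv_reverse]

lemma mul_mem_ball {G : Type*} [Group G] {X : Set G} {j k : ℕ} {a b : G}
    (ha : a ∈ ball X j) (hb : b ∈ ball X k) : a * b ∈ ball X (j + k) := by
  obtain ⟨l₁, hm₁, hl₁, hp₁⟩ := ha
  obtain ⟨l₂, hm₂, hl₂, hp₂⟩ := hb
  refine ⟨l₁ ++ l₂, ?_, by simp; omega, by simp [hp₁, hp₂]⟩
  intro y hy
  rcases List.mem_append.mp hy with h | h
  · exact hm₁ y h
  · exact hm₂ y h

lemma ball_decomp {G : Type*} [Group G] {X : Set G} {k C : ℕ} {x : G}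
    (hx : x ∈ ball X (k + C)) : ∃ a ∈ ball X k, ∃ b ∈ ball X C, x = a * b := by
  obtain ⟨l, hmem, hlen, hprod⟩ := hx
  refine ⟨(l.take k).prod, ⟨l.take k, fun y hy => hmem y (List.mem_of_mem_take hy),
      by simp, rfl⟩,
    (l.drop k).prod, ⟨l.drop k, fun y hy => hmem y (List.mem_of_mem_drop hy),
      by simp; omega, rfl⟩, ?_⟩
  rw [← List.prod_append, List.take_append_drop, hprod]

theorem liminf_density_of_cover {G : Type*} [Group G] (X : Set G) (hXfin : X.Finite)
    (hXgen : Subgroup.closure X = ⊤) (S : Set G) (C m : ℕ) (g : Fin m → G)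
    (hg : ∀ i, g i ∈ ball X C)
    (hcover : ∀ x : G, ∃ i : Fin m, ∃ s ∈ S, x = s * g i) :
    (1 : ℝ) / (m * Nat.card (ball X C)) ≤
      Filter.liminf
        (fun k : ℕ => (Nat.card ↥(S ∩ ball X k) : ℝ) / (Nat.card ↥(ball X k) : ℝ))
        Filter.atTop := by
  classical
  have hm : 0 < m := (hcover 1).choose.pos
  haveI : ∀ k, Finite ↥(ball X k) := fun k => (ball_finite hXfin k).to_subtype
  haveI : ∀ k, Finite ↥(S ∩ ball X k : Set G) :=
    fun k => ((ball_finite hXfin k).subset Set.inter_subset_right).to_subtype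
  have hballpos : ∀ k, 0 < Nat.card ↥(ball X k) := fun k =>
    Nat.card_pos_iff.mpr ⟨⟨⟨1, one_mem_ball X k⟩⟩, inferInstance⟩
  -- |B(k)| ≤ m * |S ∩ B(k+C)|
  have key1 : ∀ k, Nat.card ↥(ball X k) ≤ m * Nat.card ↥(S ∩ ball X (k + C) : Set G) := by
    intro k
    have hF : ∀ x ∈ ball X k, ∃ p : Fin m × ↥(S ∩ ball X (k + C) : Set G),
        x = (p.2 : G) * g p.1 := by
      intro x hx
      obtain ⟨i, s, hs, hxs⟩ := hcover x
      have hsball : s ∈ ball X (k + C) := by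
        have : s = x * (g i)⁻¹ := by rw [hxs]; group
        rw [this]
        exact mul_mem_ball hx (inv_mem_ball (hg i))
      exact ⟨⟨i, ⟨s, hs, hsball⟩⟩, hxs⟩
    have := Nat.card_le_card_of_injective
      (fun x : ↥(ball X k) => (hF x x.2).choose)
      (fun x y hxy => by
        apply Subtype.ext
        rw [(hF x x.2).choose_spec, (hF y y.2).choose_spec]
        exact congrArg (fun p => (p.2 : G) * g p.1) hxy)
    simpa [Nat.card_prod] using this
  -- |B(k+C)| ≤ |B(k)| * |B(C)|
  have key2 : ∀ k, Nat.card ↥(ball X (k + C)) ≤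
      Nat.card ↥(ball X k) * Nat.card ↥(ball X C) := by
    intro k
    have hF : ∀ x ∈ ball X (k + C), ∃ p : ↥(ball X k) × ↥(ball X C),
        x = (p.1 : G) * (p.2 : G) := by
      intro x hx
      obtain ⟨a, ha, b, hb, hab⟩ := ball_decomp hx
      exact ⟨⟨⟨a, ha⟩, ⟨b, hb⟩⟩, hab⟩
    have := Nat.card_le_card_of_injective
      (fun x : ↥(ball X (k + C)) => (hF x x.2).choose)
      (fun x y hxy => by
        apply Subtype.ext
        rw [(hF x x.2).choose_spec, (hF y y.2).choose_spec]
        exact congrArg (fun p => (p.1 : G) * (p.2 : G)) hxy)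
    simpa [Nat.card_prod] using this
  have hCpos : 0 < Nat.card ↥(ball X C) := hballpos C
  set c : ℝ := 1 / (m * Nat.card ↥(ball X C)) with hc
  have hbound : ∀ n, C ≤ n →
      c ≤ (Nat.card ↥(S ∩ ball X n : Set G) : ℝ) / (Nat.card ↥(ball X n) : ℝ) := by
    intro n hn
    obtain ⟨k, rfl⟩ : ∃ k, n = k + C := ⟨n - C, by omega⟩
    have h1 := key1 k
    have h2 := key2 k
    have hb : (0 : ℝ) < Nat.card ↥(ball X (k + C)) := by exact_mod_cast hballpos (k + C)
    have hmc : (0 : ℝ) < (m : ℝ) * Nat.card ↥(ball X C) := by positivity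
    rw [hc, div_le_div_iff₀ hmc hb]
    have h1' : (Nat.card ↥(ball X k) : ℝ) ≤ m * Nat.card ↥(S ∩ ball X (k + C) : Set G) := by
      exact_mod_cast h1
    have h2' : (Nat.card ↥(ball X (k + C)) : ℝ) ≤
        (Nat.card ↥(ball X k) : ℝ) * Nat.card ↥(ball X C) := by exact_mod_cast h2
    have hCpos' : (0 : ℝ) ≤ (Nat.card ↥(ball X C) : ℝ) := by positivity
    nlinarith
  apply Filter.le_liminf_of_le
  · apply Filter.isCoboundedUnder_ge_of_eventually_le Filter.atTop (x := 1)
    filter_upwards with n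
    apply div_le_one_of_le₀
    · exact_mod_cast Nat.card_mono (ball_finite hXfin n) Set.inter_subset_right
    · positivity
  · filter_upwards [Filter.eventually_ge_atTop C] with n hn using hbound n hn
end

section
/- Let F be a free group on two generators x and y. Then the commutator [x,y] = x y x⁻¹ y⁻¹ is a test element of F: every endomorphism of F fixing [x,y] is an automorphism. -/
/- Proof of Nielsen's theorem (1918): the commutator [x,y] is a test element of the
   free group on two generators.  Strategy: descent on norm a + norm b for the pair
   (a,b) = (φ x, φ y), using the elementary Nielsen moves (a,b) ↦ (a b^{±1}, b),
   (a, b a^{±1}), which preserve the exact commutator.  A cancellation-theory argument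
   shows any pair with [a,b] = [x,y] admitting no length-decreasing move has
   |a|,|b| ≤ 2, and a finite (decidable) check classifies those pairs. -/

namespace NielsenAux
open FreeGroup List

abbrev Wd := List (Fin 2 × Bool)

def linv (p : Fin 2 × Bool) : Fin 2 × Bool := (p.1, !p.2)

def compat (p q : Fin 2 × Bool) : Prop := ¬(p.1 = q.1 ∧ p.2 = !q.2)

instance : DecidableRel compat := fun p q => inferInstanceAs (Decidable ¬(p.1 = q.1 ∧ p.2 = !q.2))

def Reduced (L : Wd) : Prop := List.Chain' compat L

instance : DecidablePred Reduced := fun L => inferInstanceAs (Decidable (List.IsChain compat L))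

lemma reduce_eq_self_of {L : Wd} (h : Reduced L) : FreeGroup.reduce L = L := by
  induction L with
  | nil => rfl
  | cons p L ih =>
    rw [reduce.cons, ih h.tail]
    cases L with
    | nil => rfl
    | cons q L' =>
      have hpq : compat p q := (List.isChain_cons_cons.mp h).1
      exact if_neg hpq

lemma reduced_reduce (L : Wd) : Reduced (FreeGroup.reduce L) := by
  induction L with
  | nil => exact List.isChain_nil
  | cons p L ih =>
    rw [reduce.cons]
    rcases h : FreeGroup.reduce L with _ | ⟨q, tl⟩
    · exact List.isChain_singleton p
    · rw [h] at ih
      show Reduced (if p.1 = q.1 ∧ p.2 = !q.2 then tl else p :: q :: tl)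
      by_cases hc : p.1 = q.1 ∧ p.2 = !q.2
      · rw [if_pos hc]; exact ih.tail
      · rw [if_neg hc]; exact List.isChain_cons_cons.mpr ⟨hc, ih⟩

lemma reduced_toWord (g : FreeGroup (Fin 2)) : Reduced g.toWord := by
  rw [← reduce_toWord]; exact reduced_reduce _

lemma invRev_append (X Y : Wd) : invRev (X ++ Y) = invRev Y ++ invRev X := by
  simp [invRev]

lemma invRev_cons (p : Fin 2 × Bool) (X : Wd) : invRev (p :: X) = invRev X ++ [linv p] := by
  simp [invRev, linv]

lemma invRev_singleton (p : Fin 2 × Bool) : invRev [p] = [linv p] := by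
  simp [invRev, linv]

lemma compat_linv {p q : Fin 2 × Bool} (h : compat p q) : compat (linv q) (linv p) := by
  rcases p with ⟨i, b⟩; rcases q with ⟨j, c⟩
  simp only [compat, linv] at *
  rintro ⟨rfl, h2⟩
  exact h ⟨rfl, by cases b <;> cases c <;> simp_all⟩

lemma reduced_invRev {L : Wd} (h : Reduced L) : Reduced (invRev L) := by
  unfold Reduced List.Chain' FreeGroup.invRev
  rw [List.isChain_reverse, List.isChain_map]
  exact h.imp fun a b hab => compat_linv hab


lemma cancel_words (U : Wd) : ∀ (V : Wd), Reduced U → Reduced V →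
    ∃ U' C V', U = U' ++ C ∧ V = invRev C ++ V' ∧ Reduced (U' ++ V') := by
  induction U using List.reverseRecOn with
  | nil =>
    intro V _ hV
    exact ⟨[], [], V, by simp, by simp [invRev], by simpa using hV⟩
  | append_singleton U₀ p ih =>
    intro V hU hV
    rcases V with _ | ⟨q, V₀⟩
    · exact ⟨U₀ ++ [p], [], [], by simp, by simp [invRev], by simpa using hU⟩
    · by_cases hc : compat p q
      · refine ⟨U₀ ++ [p], [], q :: V₀, by simp, by simp [invRev], ?_⟩
        refine List.isChain_append.mpr ⟨hU, hV, ?_⟩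
        intro x hx y hy
        have hx' : x = p := by simpa [List.getLast?_concat, eq_comm] using hx
        have hy' : y = q := by simpa [eq_comm] using hy
        subst hx'; subst hy'; exact hc
      · have hc' : p.1 = q.1 ∧ p.2 = !q.2 := not_not.mp hc
        have hq : q = linv p := by
          rcases q with ⟨j, c⟩; rcases p with ⟨i, b⟩
          obtain ⟨h1, h2⟩ := hc'
          simp only at h1 h2
          subst h1; subst h2
          simp [linv]
        have hU₀ : Reduced U₀ := (List.isChain_append.mp hU).1
        have hV₀ : Reduced V₀ := hV.tail
        obtain ⟨U', C', V', e1, e2, hred⟩ := ih V₀ hU₀ hV₀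
        refine ⟨U', C' ++ [p], V', by rw [e1, List.append_assoc], ?_, hred⟩
        rw [invRev_append, invRev_singleton, hq, e2]
        simp


lemma toWord_eq_self {L : Wd} (h : Reduced L) : (mk L).toWord = L := by
  rw [toWord_mk, reduce_eq_self_of h]

lemma mk_append (X Y : Wd) : mk (X ++ Y) = mk X * mk Y := (mul_mk).symm

lemma mk_invRev (X : Wd) : mk (invRev X) = (mk X)⁻¹ := (inv_mk).symm

lemma cancel (a b : FreeGroup (Fin 2)) :
    ∃ U C V, a.toWord = U ++ C ∧ b.toWord = invRev C ++ V ∧ (a * b).toWord = U ++ V := by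
  obtain ⟨U, C, V, e1, e2, h⟩ := cancel_words _ b.toWord (reduced_toWord a) (reduced_toWord b)
  refine ⟨U, C, V, e1, e2, ?_⟩
  have hab : a * b = mk (U ++ V) := by
    conv_lhs => rw [← mk_toWord (x := a), ← mk_toWord (x := b), e1, e2]
    rw [mk_append, mk_append, mk_invRev, mk_append]
    group
  rw [hab, toWord_eq_self h]

lemma norm_def (a : FreeGroup (Fin 2)) : norm a = a.toWord.length := rfl

/-- the commutator element -/
def Wgp : FreeGroup (Fin 2) :=
  FreeGroup.of 0 * FreeGroup.of 1 * (FreeGroup.of 0)⁻¹ * (FreeGroup.of 1)⁻¹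

def Wword : Wd := [(0, true), (1, true), (0, false), (1, false)]

lemma Wgp_eq_mk : Wgp = mk Wword := by
  unfold Wgp
  rw [show (FreeGroup.of (0 : Fin 2)) = mk [(0, true)] from rfl,
      show (FreeGroup.of (1 : Fin 2)) = mk [(1, true)] from rfl]
  rw [inv_mk, inv_mk, mul_mk, mul_mk, mul_mk]
  rfl

lemma reduced_Wword : Reduced Wword := by
  refine List.isChain_cons_cons.mpr ⟨?_, List.isChain_cons_cons.mpr ⟨?_, List.isChain_cons_cons.mpr
    ⟨?_, List.isChain_singleton _⟩⟩⟩ <;> decide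

lemma toWord_Wgp : Wgp.toWord = Wword := by
  rw [Wgp_eq_mk, toWord_eq_self reduced_Wword]

lemma Wgp_ne_one : Wgp ≠ 1 := by
  intro h
  have := toWord_Wgp
  rw [h, toWord_one] at this
  exact absurd this (by decide)


lemma no_inv_self {Q : Wd} (h : Reduced (invRev Q ++ Q)) : Q = [] := by
  rcases Q with _ | ⟨z, Q'⟩
  · rfl
  · exfalso
    rw [invRev_cons, List.append_assoc] at h
    have h2 := (List.isChain_append.mp h).2.1
    have h3 := (List.isChain_cons_cons.mp h2).1
    exact h3 ⟨rfl, rfl⟩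

theorem stuck_small (a b : FreeGroup (Fin 2))
    (hw : a * b * a⁻¹ * b⁻¹ = Wgp)
    (h1 : norm a ≤ norm (a * b)) (h2 : norm a ≤ norm (a * b⁻¹))
    (h3 : norm b ≤ norm (b * a)) (h4 : norm b ≤ norm (b * a⁻¹)) :
    norm a ≤ 2 ∧ norm b ≤ 2 := by
  have ha1 : a ≠ 1 := by
    rintro rfl; rw [one_mul, inv_one, mul_one] at hw
    exact Wgp_ne_one (by rw [← hw]; group)
  have hb1 : b ≠ 1 := by
    rintro rfl; rw [mul_one, inv_one, mul_one] at hw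
    exact Wgp_ne_one (by rw [← hw]; group)
  have ha0 : 0 < a.toWord.length := by
    rcases Nat.eq_zero_or_pos a.toWord.length with h | h
    · exact absurd (toWord_eq_nil_iff.mp (List.length_eq_zero_iff.mp h)) ha1
    · exact h
  have hb0 : 0 < b.toWord.length := by
    rcases Nat.eq_zero_or_pos b.toWord.length with h | h
    · exact absurd (toWord_eq_nil_iff.mp (List.length_eq_zero_iff.mp h)) hb1
    · exact h
  obtain ⟨A₁, P, B₁, ea1, eb1, eab⟩ := cancel a b
  obtain ⟨B₂, Q, T, eb2, eainv, ebainv⟩ := cancel b a⁻¹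
  obtain ⟨B₃, R, A₃, eb3, ea3, eba⟩ := cancel b a
  -- second decomposition of a
  have ea2 : a.toWord = invRev T ++ Q := by
    rw [toWord_inv] at eainv
    have h := congrArg invRev eainv
    rwa [invRev_invRev, invRev_append, invRev_invRev] at h
  -- lengths
  have lA : a.toWord.length = A₁.length + P.length := by rw [ea1]; simp
  have lA' : a.toWord.length = T.length + Q.length := by
    rw [ea2]; simp [invRev_length]
  have lA'' : a.toWord.length = R.length + A₃.length := by
    rw [ea3]; simp [invRev_length]
  have lB : b.toWord.length = P.length + B₁.length := by
    rw [eb1]; simp [invRev_length]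
  have lB' : b.toWord.length = B₂.length + Q.length := by rw [eb2]; simp
  have lB'' : b.toWord.length = B₃.length + R.length := by rw [eb3]; simp
  -- stuck inequalities in length form
  have h1' : a.toWord.length ≤ A₁.length + B₁.length := by
    rw [norm_def, norm_def, eab, List.length_append] at h1; exact h1
  have h3' : b.toWord.length ≤ B₃.length + A₃.length := by
    rw [norm_def, norm_def, eba, List.length_append] at h3; exact h3
  have h4' : b.toWord.length ≤ B₂.length + T.length := by
    rw [norm_def, norm_def, ebainv, List.length_append] at h4; exact h4
  have h2' : a.toWord.length ≤ B₂.length + T.length := by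
    have : norm (a * b⁻¹) = norm (b * a⁻¹) := by
      rw [← norm_inv_eq (x := a * b⁻¹)]; congr 1; group
    rw [this, norm_def, norm_def, ebainv, List.length_append] at h2; exact h2
  -- (6')
  have hPQ : P.length + Q.length < b.toWord.length := by
    by_contra hge
    push_neg at hge
    have e1 : B₁.length = Q.length := by omega
    have e2 : P.length = Q.length := by omega
    have hB₁Q : B₁ = Q :=
      (List.append_inj' (eb1.symm.trans eb2) e1).2
    have hPQe : P = Q :=
      (List.append_inj' (ea1.symm.trans ea2) (by omega)).2
    have hbad : Reduced (invRev Q ++ Q) := by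
      have := reduced_toWord b
      rwa [eb1, hB₁Q, hPQe] at this
    have hQ0 : Q.length = 0 := by rw [no_inv_self hbad]; rfl
    omega
  -- (7')
  have hQR : Q.length + R.length < a.toWord.length := by
    by_contra hge
    push_neg at hge
    have e1 : A₃.length = Q.length := by omega
    have e2 : R.length = Q.length := by omega
    have hA₃Q : A₃ = Q :=
      (List.append_inj' (ea3.symm.trans ea2) e1).2
    have hRQ : R = Q :=
      (List.append_inj' (eb3.symm.trans eb2) e2).2
    have hbad : Reduced (invRev Q ++ Q) := by
      have := reduced_toWord a
      rwa [ea3, hA₃Q, hRQ] at this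
    have hQ0 : Q.length = 0 := by rw [no_inv_self hbad]; rfl
    omega
  -- define M
  have hpre : invRev P <+: B₂ :=
    List.prefix_of_prefix_length_le ⟨B₁, eb1.symm⟩ ⟨Q, eb2.symm⟩
      (by rw [invRev_length]; omega)
  obtain ⟨M, eM⟩ := hpre
  have eB₁ : B₁ = M ++ Q := by
    have : invRev P ++ B₁ = invRev P ++ (M ++ Q) := by
      rw [← List.append_assoc, eM, ← eb2, ← eb1]
    exact List.append_cancel_left this
  -- define N
  have hsuf : Q <:+ A₃ :=
    List.suffix_of_suffix_length_le ⟨invRev T, ea2.symm⟩ ⟨invRev R, ea3.symm⟩ (by omega)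
  obtain ⟨N, eN⟩ := hsuf
  have eT : T = invRev N ++ R := by
    have h0 : invRev T ++ Q = invRev R ++ (N ++ Q) := by rw [eN, ← ea3, ← ea2]
    have h1 : invRev T = invRev R ++ N :=
      (List.append_inj' (by rw [h0, List.append_assoc]) rfl).1
    have h2 := congrArg invRev h1
    rwa [invRev_invRev, invRev_append, invRev_invRev] at h2
  -- length consequences
  have lM : b.toWord.length = P.length + M.length + Q.length := by
    rw [eb1, eB₁]; simp [invRev_length]; omega
  have lN : a.toWord.length = R.length + N.length + Q.length := by
    rw [ea3, ← eN]; simp [invRev_length]; omega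
  have hMne : M ≠ [] := by
    intro h; rw [h] at lM; simp at lM; omega
  have hNne : N ≠ [] := by
    intro h; rw [h] at lN; simp at lN; omega
  -- group element identity
  have haA : a = mk (A₁ ++ P) := by rw [← ea1, mk_toWord]
  have haA' : a = mk (invRev R ++ (N ++ Q)) := by rw [eN, ← ea3, mk_toWord]
  have hbB : b = mk (invRev P ++ (M ++ Q)) := by
    rw [← eB₁, ← eb1, mk_toWord]
  have hbB' : b = mk (B₃ ++ R) := by rw [← eb3, mk_toWord]
  have hprod : a * b * a⁻¹ * b⁻¹ =
      mk (A₁ ++ P) * mk (invRev P ++ (M ++ Q)) *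
        (mk (invRev R ++ (N ++ Q)))⁻¹ * (mk (B₃ ++ R))⁻¹ := by
    rw [← haA, ← hbB, ← haA', ← hbB']
  have hgrp : mk (A₁ ++ P) * mk (invRev P ++ (M ++ Q)) *
      (mk (invRev R ++ (N ++ Q)))⁻¹ * (mk (B₃ ++ R))⁻¹ =
      mk (A₁ ++ (M ++ (invRev N ++ invRev B₃))) := by
    simp only [mk_append, mk_invRev]
    group
  have hkey : Wgp = mk (A₁ ++ (M ++ (invRev N ++ invRev B₃))) := by
    rw [← hw, hprod, hgrp]
  -- Reducedness of the assembled word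
  have Rab : Reduced (A₁ ++ (M ++ Q)) := by
    have := reduced_toWord (a * b); rwa [eab, eB₁] at this
  have Rba' : Reduced ((invRev P ++ M) ++ (invRev N ++ R)) := by
    have := reduced_toWord (b * a⁻¹); rwa [ebainv, ← eM, eT] at this
  have Rba : Reduced (B₃ ++ (N ++ Q)) := by
    have := reduced_toWord (b * a); rwa [eba, ← eN] at this
  obtain ⟨m, M', hMc⟩ := List.exists_cons_of_ne_nil hMne
  obtain ⟨n, N', hNc⟩ := List.exists_cons_of_ne_nil hNne
  have RG : Reduced (A₁ ++ (M ++ (invRev N ++ invRev B₃))) := by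
    refine List.isChain_append.mpr ⟨(List.isChain_append.mp Rab).1, ?_, ?_⟩
    · refine List.isChain_append.mpr ⟨((List.isChain_append.mp Rab).2.1).prefix ⟨Q, rfl⟩, ?_, ?_⟩
      · refine List.isChain_append.mpr
          ⟨reduced_invRev (((List.isChain_append.mp Rba).2.1).prefix ⟨Q, rfl⟩),
           reduced_invRev (List.isChain_append.mp Rba).1, ?_⟩
        -- junction: last of invRev N vs head of invRev B₃
        intro x hx y hy
        rw [hNc, invRev_cons, List.getLast?_concat] at hx
        simp only [Option.mem_def, Option.some.injEq] at hx
        subst hx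
        rcases List.eq_nil_or_concat' B₃ with hB₃ | ⟨B₀, z, hBz⟩
        · rw [hB₃] at hy; simp [invRev] at hy
        · rw [hBz, invRev_append, invRev_singleton] at hy
          simp only [List.head?, List.cons_append, Option.mem_def, Option.some.injEq] at hy
          subst hy
          -- compat (linv n) (linv z) from compat z n
          apply compat_linv
          have hj := (List.isChain_append.mp Rba).2.2 z (by rw [hBz, List.getLast?_concat]; rfl)
            n (by rw [hNc]; rfl)
          exact hj
      · -- junction: last of M vs head of (invRev N ++ invRev B₃)
        intro x hx y hy
        have hj := (List.isChain_append.mp Rba').2.2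
        obtain ⟨M₀, mz, hMz⟩ := (List.eq_nil_or_concat' M).resolve_left hMne
        rw [hMz, List.getLast?_concat] at hx
        simp only [Option.mem_def, Option.some.injEq] at hx; subst hx
        obtain ⟨N₀, nz, hNz⟩ := (List.eq_nil_or_concat' N).resolve_left hNne
        rw [hNz, invRev_append, invRev_singleton] at hy
        simp only [List.head?, List.cons_append, Option.mem_def, Option.some.injEq] at hy
        subst hy
        apply hj
        · rw [hMz, ← List.append_assoc, List.getLast?_concat]; rfl
        · rw [hNz, invRev_append, invRev_singleton]; rfl
    · -- junction: last of A₁ vs head of (M ++ ...)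
      intro x hx y hy
      rw [hMc] at hy
      simp only [List.head?, List.cons_append, Option.mem_def, Option.some.injEq] at hy
      subst hy
      exact (List.isChain_append.mp Rab).2.2 x hx m (by rw [hMc]; rfl)
  -- conclude lengths
  have hGw : A₁ ++ (M ++ (invRev N ++ invRev B₃)) = Wword := by
    have h := congrArg FreeGroup.toWord hkey
    rw [toWord_Wgp, toWord_eq_self RG] at h
    exact h.symm
  have hlen : A₁.length + M.length + N.length + B₃.length = 4 := by
    have := congrArg List.length hGw
    simp [invRev_length, Wword] at this
    omega
  constructor <;> rw [norm_def] <;> omega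


def letters : List (Fin 2 × Bool) := [(0,true),(0,false),(1,true),(1,false)]
def L2 : List Wd :=
  [[]] ++ letters.map (fun p => [p]) ++
    (letters.flatMap (fun p => letters.map (fun q => [p, q])))

lemma mem_L2 (A : Wd) (hA : A.length ≤ 2) : A ∈ L2 := by
  match A with
  | [] => simp [L2]
  | [p] =>
    rcases p with ⟨i, c⟩
    fin_cases i <;> cases c <;> simp [L2, letters]
  | [p, q] =>
    rcases p with ⟨i, c⟩; rcases q with ⟨j, d⟩
    fin_cases i <;> fin_cases j <;> cases c <;> cases d <;> simp [L2, letters]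
  | p :: q :: r :: A' => simp at hA

def checkB (A B : Wd) : Bool :=
  !(decide (FreeGroup.reduce A = A) && decide (FreeGroup.reduce B = B) &&
    decide (FreeGroup.reduce (A ++ B ++ invRev A ++ invRev B) = Wword) &&
    decide (A.length ≤ (FreeGroup.reduce (A ++ B)).length) &&
    decide (A.length ≤ (FreeGroup.reduce (A ++ invRev B)).length) &&
    decide (B.length ≤ (FreeGroup.reduce (B ++ A)).length) &&
    decide (B.length ≤ (FreeGroup.reduce (B ++ invRev A)).length)) ||
  (decide ((A = [(0,true)] ∧ B = [(1,true)]) ∨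
     (A = [(1,false)] ∧ B = [(1,true),(0,true)]) ∨
     (A = [(0,true),(1,true)] ∧ B = [(0,false)])))

set_option maxRecDepth 10000 in
lemma finite_check_bool : (L2.all fun A => L2.all fun B => checkB A B) = true := by decide

lemma finite_check : ∀ A ∈ L2, ∀ B ∈ L2,
    FreeGroup.reduce A = A → FreeGroup.reduce B = B →
    FreeGroup.reduce (A ++ B ++ invRev A ++ invRev B) = Wword →
    A.length ≤ (FreeGroup.reduce (A ++ B)).length →
    A.length ≤ (FreeGroup.reduce (A ++ invRev B)).length →
    B.length ≤ (FreeGroup.reduce (B ++ A)).length →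
    B.length ≤ (FreeGroup.reduce (B ++ invRev A)).length →
    ((A = [(0,true)] ∧ B = [(1,true)]) ∨
     (A = [(1,false)] ∧ B = [(1,true),(0,true)]) ∨
     (A = [(0,true),(1,true)] ∧ B = [(0,false)])) := by
  intro A hA B hB h1 h2 h3 h4 h5 h6 h7
  have hall := List.all_eq_true.mp (List.all_eq_true.mp finite_check_bool A hA) B hB
  unfold checkB at hall
  simp only [Bool.or_eq_true, Bool.not_eq_true', Bool.and_eq_true, decide_eq_true_eq,
    Bool.and_eq_false_iff, decide_eq_false_iff_not] at hall
  tauto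


lemma small_classify (a b : FreeGroup (Fin 2))
    (hw : a * b * a⁻¹ * b⁻¹ = Wgp)
    (h1 : norm a ≤ norm (a * b)) (h2 : norm a ≤ norm (a * b⁻¹))
    (h3 : norm b ≤ norm (b * a)) (h4 : norm b ≤ norm (b * a⁻¹))
    (hna : norm a ≤ 2) (hnb : norm b ≤ 2) :
    (a = of 0 ∧ b = of 1) ∨
    (a = (of 1)⁻¹ ∧ b = of 1 * of 0) ∨
    (a = of 0 * of 1 ∧ b = (of 0)⁻¹) := by
  have hAmem := mem_L2 a.toWord (by rw [← norm_def]; exact hna)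
  have hBmem := mem_L2 b.toWord (by rw [← norm_def]; exact hnb)
  have key₁ : ∀ (x y : FreeGroup (Fin 2)), (x * y).toWord = FreeGroup.reduce (x.toWord ++ y.toWord) := by
    intro x y
    rw [show x * y = mk (x.toWord ++ y.toWord) by rw [mk_append, mk_toWord, mk_toWord], toWord_mk]
  have hcomm : FreeGroup.reduce (a.toWord ++ b.toWord ++ invRev a.toWord ++ invRev b.toWord) = Wword := by
    have : a * b * a⁻¹ * b⁻¹ = mk (a.toWord ++ b.toWord ++ invRev a.toWord ++ invRev b.toWord) := by
      simp only [mk_append, mk_invRev, mk_toWord]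
    rw [this] at hw
    rw [← toWord_Wgp, ← hw, toWord_mk]
  have c1 : a.toWord.length ≤ (FreeGroup.reduce (a.toWord ++ b.toWord)).length := by
    rw [← key₁]; exact h1
  have c2 : a.toWord.length ≤ (FreeGroup.reduce (a.toWord ++ invRev b.toWord)).length := by
    rw [← toWord_inv, ← key₁]; exact h2
  have c3 : b.toWord.length ≤ (FreeGroup.reduce (b.toWord ++ a.toWord)).length := by
    rw [← key₁]; exact h3
  have c4 : b.toWord.length ≤ (FreeGroup.reduce (b.toWord ++ invRev a.toWord)).length := by
    rw [← toWord_inv, ← key₁]; exact h4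
  have := finite_check a.toWord hAmem b.toWord hBmem (reduce_toWord a) (reduce_toWord b)
    hcomm c1 c2 c3 c4
  have conv : ∀ (x : FreeGroup (Fin 2)) (L : Wd), x.toWord = L → x = mk L := by
    intro x L h; rw [← h, mk_toWord]
  rcases this with ⟨hA, hB⟩ | ⟨hA, hB⟩ | ⟨hA, hB⟩
  · left
    exact ⟨conv a _ hA, conv b _ hB⟩
  · right; left
    constructor
    · rw [conv a _ hA, show ((of 1 : FreeGroup (Fin 2)))⁻¹ = mk [(1, false)] from rfl]
    · rw [conv b _ hB, show ((of 1 : FreeGroup (Fin 2)) * of 0) = mk [(1,true),(0,true)] from rfl]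
  · right; right
    constructor
    · rw [conv a _ hA, show ((of 0 : FreeGroup (Fin 2)) * of 1) = mk [(0,true),(1,true)] from rfl]
    · rw [conv b _ hB, show ((of 0 : FreeGroup (Fin 2)))⁻¹ = mk [(0, false)] from rfl]


/-- hom with prescribed values on generators -/
def homOf (u v : FreeGroup (Fin 2)) : FreeGroup (Fin 2) →* FreeGroup (Fin 2) :=
  FreeGroup.lift (fun i => if i = 0 then u else v)

@[simp] lemma homOf_0 (u v : FreeGroup (Fin 2)) : homOf u v (of 0) = u := by
  simp [homOf]

@[simp] lemma homOf_1 (u v : FreeGroup (Fin 2)) : homOf u v (of 1) = v := by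
  simp [homOf]

lemma hom_ext {f g : FreeGroup (Fin 2) →* FreeGroup (Fin 2)}
    (h0 : f (of 0) = g (of 0)) (h1 : f (of 1) = g (of 1)) : f = g := by
  apply FreeGroup.ext_hom
  intro i
  fin_cases i
  · exact h0
  · exact h1

def σR : FreeGroup (Fin 2) →* FreeGroup (Fin 2) := homOf (of 0 * of 1) (of 1)
def σR' : FreeGroup (Fin 2) →* FreeGroup (Fin 2) := homOf (of 0 * (of 1)⁻¹) (of 1)
def σS : FreeGroup (Fin 2) →* FreeGroup (Fin 2) := homOf (of 0) (of 1 * of 0)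
def σS' : FreeGroup (Fin 2) →* FreeGroup (Fin 2) := homOf (of 0) (of 1 * (of 0)⁻¹)

lemma σRR' : σR.comp σR' = MonoidHom.id _ :=
  hom_ext (by simp [σR, σR', map_mul, map_inv]) (by simp [σR, σR'])
lemma σR'R : σR'.comp σR = MonoidHom.id _ :=
  hom_ext (by simp [σR, σR', map_mul, map_inv]) (by simp [σR, σR'])
lemma σSS' : σS.comp σS' = MonoidHom.id _ :=
  hom_ext (by simp [σS, σS', map_mul, map_inv]) (by simp [σS, σS'])
lemma σS'S : σS'.comp σS = MonoidHom.id _ :=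
  hom_ext (by simp [σS, σS', map_mul, map_inv]) (by simp [σS, σS'])

lemma bij_of_inv {f g : FreeGroup (Fin 2) →* FreeGroup (Fin 2)}
    (h1 : f.comp g = MonoidHom.id _) (h2 : g.comp f = MonoidHom.id _) :
    Function.Bijective f := by
  refine Function.bijective_iff_has_inverse.mpr ⟨g, fun x => ?_, fun x => ?_⟩
  · exact DFunLike.congr_fun h2 x
  · exact DFunLike.congr_fun h1 x

lemma bij_move (φ : FreeGroup (Fin 2) →* FreeGroup (Fin 2))
    {σ τ : FreeGroup (Fin 2) →* FreeGroup (Fin 2)}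
    (hστ : σ.comp τ = MonoidHom.id _) (hτσ : τ.comp σ = MonoidHom.id _)
    (hb : Function.Bijective (φ.comp σ)) : Function.Bijective φ := by
  have hφ : ⇑φ = ⇑(φ.comp σ) ∘ ⇑τ := by
    rw [← MonoidHom.coe_comp, MonoidHom.comp_assoc, hστ, MonoidHom.comp_id]
  rw [hφ]
  exact hb.comp (bij_of_inv hτσ hστ)

theorem main_aux (n : ℕ) : ∀ (a b : FreeGroup (Fin 2))
    (φ : FreeGroup (Fin 2) →* FreeGroup (Fin 2)),
    norm a + norm b ≤ n → φ (of 0) = a → φ (of 1) = b →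
    a * b * a⁻¹ * b⁻¹ = Wgp → Function.Bijective φ := by
  induction n with
  | zero =>
    intro a b φ hn h0 h1 hw
    have ha : a = 1 := norm_eq_zero.mp (by omega)
    have hb : b = 1 := norm_eq_zero.mp (by omega)
    rw [ha, hb] at hw
    simp at hw
    exact absurd hw.symm Wgp_ne_one
  | succ n ih =>
    intro a b φ hn h0 h1 hw
    by_cases hc1 : norm (a * b) < norm a
    · -- move to (a*b, b), φ' = φ.comp σR
      refine bij_move φ σRR' σR'R (ih (a * b) b (φ.comp σR) ?_ ?_ ?_ ?_)
      · omega
      · simp [σR, map_mul, h0, h1]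
      · simp [σR, h1]
      · rw [← hw]; group
    by_cases hc2 : norm (a * b⁻¹) < norm a
    · refine bij_move φ σR'R σRR' (ih (a * b⁻¹) b (φ.comp σR') ?_ ?_ ?_ ?_)
      · omega
      · simp [σR', map_mul, map_inv, h0, h1]
      · simp [σR', h1]
      · rw [← hw]; group
    by_cases hc3 : norm (b * a) < norm b
    · refine bij_move φ σSS' σS'S (ih a (b * a) (φ.comp σS) ?_ ?_ ?_ ?_)
      · omega
      · simp [σS, h0]
      · simp [σS, map_mul, h0, h1]
      · rw [← hw]; group
    by_cases hc4 : norm (b * a⁻¹) < norm b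
    · refine bij_move φ σS'S σSS' (ih a (b * a⁻¹) (φ.comp σS') ?_ ?_ ?_ ?_)
      · omega
      · simp [σS', h0]
      · simp [σS', map_mul, map_inv, h0, h1]
      · rw [← hw]; group
    -- stuck case
    push_neg at hc1 hc2 hc3 hc4
    obtain ⟨hna, hnb⟩ := stuck_small a b hw hc1 hc2 hc3 hc4
    rcases small_classify a b hw hc1 hc2 hc3 hc4 hna hnb with ⟨ha, hb⟩ | ⟨ha, hb⟩ | ⟨ha, hb⟩
    · have : φ = MonoidHom.id _ := hom_ext (by rw [h0, ha]; rfl) (by rw [h1, hb]; rfl)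
      rw [this]
      exact Function.bijective_id
    · -- a = y⁻¹, b = yx ; inverse: ψ(x) = xy, ψ(y) = x⁻¹
      have e0 : φ (of 0) = (of 1)⁻¹ := by rw [h0, ha]
      have e1 : φ (of 1) = of 1 * of 0 := by rw [h1, hb]
      refine bij_of_inv (g := homOf (of 0 * of 1) ((of 0)⁻¹)) ?_ ?_
      · refine hom_ext ?_ ?_ <;>
          simp [MonoidHom.comp_apply, map_mul, map_inv, e0, e1]
      · refine hom_ext ?_ ?_ <;>
          simp [MonoidHom.comp_apply, map_mul, map_inv, e0, e1]
    · -- a = xy, b = x⁻¹ ; inverse: ψ(x) = y⁻¹, ψ(y) = yx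
      have e0 : φ (of 0) = of 0 * of 1 := by rw [h0, ha]
      have e1 : φ (of 1) = (of 0)⁻¹ := by rw [h1, hb]
      refine bij_of_inv (g := homOf ((of 1)⁻¹) (of 1 * of 0)) ?_ ?_
      · refine hom_ext ?_ ?_ <;>
          simp [MonoidHom.comp_apply, map_mul, map_inv, e0, e1]
      · refine hom_ext ?_ ?_ <;>
          simp [MonoidHom.comp_apply, map_mul, map_inv, e0, e1]


end NielsenAux

theorem nielsen_commutator_test_element
    (φ : FreeGroup (Fin 2) →* FreeGroup (Fin 2))
    (hφ : φ (FreeGroup.of 0 * FreeGroup.of 1 * (FreeGroup.of 0)⁻¹ * (FreeGroup.of 1)⁻¹) =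
      FreeGroup.of 0 * FreeGroup.of 1 * (FreeGroup.of 0)⁻¹ * (FreeGroup.of 1)⁻¹) :
    Function.Bijective φ := by
  apply NielsenAux.main_aux (FreeGroup.norm (φ (FreeGroup.of 0)) + FreeGroup.norm (φ (FreeGroup.of 1)))
    (φ (FreeGroup.of 0)) (φ (FreeGroup.of 1)) φ le_rfl rfl rfl
  have : φ (FreeGroup.of 0) * φ (FreeGroup.of 1) * (φ (FreeGroup.of 0))⁻¹ * (φ (FreeGroup.of 1))⁻¹ =
      φ (FreeGroup.of 0 * FreeGroup.of 1 * (FreeGroup.of 0)⁻¹ * (FreeGroup.of 1)⁻¹) := by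
    simp [map_mul, map_inv]
  rw [this, hφ]
  rfl
end
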